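/- Let y_1, …, y_{N−1} solve the periodic semi-discrete FtL system and let k ∈ ℝ. Then the function t ↦ Σ_{j=1}^{N−1} (y_j(t) − k)^+ is nonincreasing on [0,∞), and likewise t ↦ Σ_{j=1}^{N−1} (y_j(t) − k)^− is nonincreasing on [0,∞). -/

import Mathlib

open Set Filter Topology

/-- `y j`, `j = 1, …, N-1`, solves the periodic semi-discrete Follow-the-Leader
system `ẏ_j(t) = (1/ℓ)(V(y_{j+1}(t)) − V(y_j(t)))` on `[0, ∞)`, with the
periodic convention `y_N := y_1`. -/
def IsFtLSolution (N : ℕ) (ℓ : ℝ) (V : ℝ → ℝ) (y : ℕ → ℝ → ℝ) : Prop :=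
  (∀ t : ℝ, y N t = y 1 t) ∧
  ∀ j ∈ Finset.Icc 1 (N - 1), ∀ t ∈ Set.Ici (0 : ℝ),
    HasDerivWithinAt (y j) (1 / ℓ * (V (y (j + 1) t) - V (y j t))) (Set.Ici (0 : ℝ)) t

private lemma ftl_aux (N : ℕ) (hN : 2 ≤ N) (ℓ : ℝ) (hℓ : 0 < ℓ)
    (W : ℝ → ℝ) (hW : Monotone W) (y : ℕ → ℝ → ℝ)
    (hper : ∀ t : ℝ, y N t = y 1 t)
    (hode : ∀ j ∈ Finset.Icc 1 (N - 1), ∀ t ∈ Set.Ici (0 : ℝ),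
      HasDerivWithinAt (y j) (1 / ℓ * (W (y (j + 1) t) - W (y j t))) (Set.Ici (0 : ℝ)) t)
    (k : ℝ) :
    AntitoneOn (fun t => ∑ j ∈ Finset.Icc 1 (N - 1), max (y j t - k) 0)
      (Set.Ici (0 : ℝ)) := by
  set J := Finset.Icc 1 (N - 1) with hJ
  have hNpos : 0 < N - 1 := by omega
  have hne : J.Nonempty := Finset.nonempty_Icc.2 (by omega)
  have hcard : J.card = N - 1 := by rw [hJ, Nat.card_Icc]; omega
  have hcont : ∀ j ∈ J, ContinuousOn (y j) (Set.Ici (0 : ℝ)) :=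
    fun j hj t ht => (hode j hj t ht).continuousWithinAt
  intro a ha b hb hab
  simp only
  -- apply the fencing lemma with constant boundary
  have hf : ContinuousOn (fun t => ∑ j ∈ J, max (y j t - k) 0) (Set.Icc a b) := by
    intro t ht
    have hsub : Set.Icc a b ⊆ Set.Ici (0 : ℝ) := fun z hz => le_trans ha hz.1
    have h : ∀ j ∈ J, ContinuousWithinAt (fun t => max (y j t - k) 0) (Set.Icc a b) t :=
      fun j hj => ((((hcont j hj).mono hsub) t ht).sub continuousWithinAt_const).max
        continuousWithinAt_const
    exact tendsto_finset_sum _ h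
  have bound : ∀ x ∈ Set.Ico a b, ∀ r, (0 : ℝ) < r →
      ∃ᶠ z in 𝓝[>] x, slope (fun t => ∑ j ∈ J, max (y j t - k) 0) x z < r := by
    intro x hx r hr
    have hx0 : x ∈ Set.Ici (0 : ℝ) := le_trans ha hx.1
    set G : ℕ → ℝ := fun j => max (W (y j x)) (W k) with hG
    set ε : ℝ := r / (N - 1 : ℕ) with hε
    have hεpos : 0 < ε := div_pos hr (by exact_mod_cast hNpos)
    have hℓ' : (0 : ℝ) ≤ 1 / ℓ := by positivity
    -- the telescoping sum vanishes
    have htel : ∑ j ∈ J, (G (j + 1) - G j) = 0 := by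
      have h1 : J = Finset.Ico 1 N := by
        rw [hJ]; ext i; simp only [Finset.mem_Icc, Finset.mem_Ico]; omega
      rw [h1, Finset.sum_Ico_eq_sum_range]
      have h2 := Finset.sum_range_sub (fun i => G (1 + i)) (N - 1)
      rw [show (∑ i ∈ Finset.range (N - 1), (G (1 + i + 1) - G (1 + i)))
          = ∑ i ∈ Finset.range (N - 1), (G (1 + (i + 1)) - G (1 + i)) from by
        apply Finset.sum_congr rfl; intro i _; rw [Nat.add_assoc]]
      rw [h2]
      have e1 : G (1 + (N - 1)) = G 1 := by
        rw [show 1 + (N - 1) = N from by omega, hG]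
        simp only [hper x]
      have e2 : G (1 + 0) = G 1 := by norm_num
      rw [e1, e2, sub_self]
    -- per-index eventual slope bound
    have hev : ∀ j ∈ J, ∀ᶠ z in 𝓝[>] x,
        slope (fun t => max (y j t - k) 0) x z < 1 / ℓ * (G (j + 1) - G j) + ε := by
      intro j hj
      set d : ℝ := 1 / ℓ * (W (y (j + 1) x) - W (y j x)) with hd
      have hD : HasDerivWithinAt (y j) d (Set.Ioi x) x :=
        ((hode j hj x hx0).mono (Set.Ici_subset_Ici.2 hx0)).Ioi_of_Ici
      have hslope : Tendsto (slope (y j) x) (𝓝[>] x) (𝓝 d) :=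
        (hasDerivWithinAt_iff_tendsto_slope' (lt_irrefl x)).1 hD
      have hcx : Tendsto (y j) (𝓝[>] x) (𝓝 (y j x)) :=
        (hcont j hj x hx0).mono (fun z (hz : z ∈ Set.Ioi x) => Set.mem_Ici.2 (hx0.trans hz.le))
      rcases lt_trichotomy (y j x) k with hlt | heq | hgt
      · -- below the level: the positive part is locally zero
        have hGj : G j = W k := max_eq_right (hW hlt.le)
        have hpos : 0 < 1 / ℓ * (G (j + 1) - G j) + ε := by
          have h1 : G j ≤ G (j + 1) := by rw [hGj]; exact le_max_right _ _
          nlinarith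
        filter_upwards [hcx (Iio_mem_nhds hlt)] with z hz
        have h1 : max (y j z - k) 0 = 0 := max_eq_right (by simp at hz; linarith)
        have h2 : max (y j x - k) 0 = 0 := max_eq_right (by linarith)
        rw [slope_def_field]
        simp only [h1, h2, sub_self, zero_div]
        exact hpos
      · -- on the level: slope of positive part is the positive part of the slope
        have hWj : W (y j x) = W k := by rw [heq]
        have hGj : G j = W k := by simp only [hG, hWj, max_self]
        have hd' : d = 1 / ℓ * (W (y (j + 1) x) - W k) := by rw [hd, hWj]
        have hmax : max d 0 = 1 / ℓ * (G (j + 1) - G j) := by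
          rcases le_total (W (y (j + 1) x)) (W k) with h | h
          · have h1 : G (j + 1) = W k := max_eq_right h
            rw [hd', h1, hGj, sub_self, mul_zero]
            exact max_eq_right (by nlinarith)
          · have h1 : G (j + 1) = W (y (j + 1) x) := max_eq_left h
            rw [hd', h1, hGj]
            exact max_eq_left (by nlinarith)
        have hlt2 : max d 0 < 1 / ℓ * (G (j + 1) - G j) + ε := by rw [hmax]; linarith
        have htend : Tendsto (fun z => max (slope (y j) x z) 0) (𝓝[>] x) (𝓝 (max d 0)) :=
          hslope.max tendsto_const_nhds
        filter_upwards [htend.eventually_lt_const hlt2, self_mem_nhdsWithin] with z hz hz'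
        have hzx : (0 : ℝ) < z - x := sub_pos.2 hz'
        have h2 : max (y j x - k) 0 = 0 := by rw [heq, sub_self, max_self]
        rw [slope_def_field, h2, sub_zero]
        have : max (y j z - k) 0 / (z - x) = max ((y j z - k) / (z - x)) 0 := by
          rw [← max_div_div_right hzx.le, zero_div]
        rw [this, show y j z - k = y j z - y j x from by rw [heq]]
        rw [show (y j z - y j x) / (z - x) = slope (y j) x z from (slope_def_field _ _ _).symm]
        exact hz
      · -- above the level: slope of positive part equals the slope
        have hGj : G j = W (y j x) := max_eq_left (hW hgt.le)
        have hdle : d < 1 / ℓ * (G (j + 1) - G j) + ε := by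
          have h1 : W (y (j + 1) x) ≤ G (j + 1) := le_max_left _ _
          have h2 : d ≤ 1 / ℓ * (G (j + 1) - G j) := by
            rw [hd, hGj]
            exact mul_le_mul_of_nonneg_left (by linarith) hℓ'
          linarith
        filter_upwards [hslope.eventually_lt_const hdle, hcx (Ioi_mem_nhds hgt)] with z hz hz'
        have h1 : max (y j z - k) 0 = y j z - k := max_eq_left (by simp at hz'; linarith)
        have h2 : max (y j x - k) 0 = y j x - k := max_eq_left (by linarith)
        rw [slope_def_field, h1, h2, show y j z - k - (y j x - k) = y j z - y j x from by ring]
        rw [show (y j z - y j x) / (z - x) = slope (y j) x z from (slope_def_field _ _ _).symm]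
        exact hz
    refine ((J.eventually_all.2 hev).mono ?_).frequently
    intro z hz
    have hsum : slope (fun t => ∑ j ∈ J, max (y j t - k) 0) x z
        = ∑ j ∈ J, slope (fun t => max (y j t - k) 0) x z := by
      simp only [slope_def_field, ← Finset.sum_div, Finset.sum_sub_distrib]
    rw [hsum]
    calc ∑ j ∈ J, slope (fun t => max (y j t - k) 0) x z
        < ∑ j ∈ J, (1 / ℓ * (G (j + 1) - G j) + ε) :=
          Finset.sum_lt_sum_of_nonempty hne hz
      _ = 1 / ℓ * ∑ j ∈ J, (G (j + 1) - G j) + J.card * ε := by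
          rw [Finset.sum_add_distrib, Finset.mul_sum, Finset.sum_const, nsmul_eq_mul]
      _ = r := by
          have hc : ((N - 1 : ℕ) : ℝ) ≠ 0 := Nat.cast_ne_zero.2 (by omega)
          rw [htel, mul_zero, zero_add, hcard, hε, mul_comm, div_mul_cancel₀ _ hc]
  have key := image_le_of_liminf_slope_right_le_deriv_boundary hf
    (le_refl (∑ j ∈ J, max (y j a - k) 0)) continuousOn_const
    (fun x _ => hasDerivWithinAt_const x _ _) bound ⟨hab, le_refl b⟩
  exact key

theorem ftl_sum_positive_negative_parts_nonincreasing
    (N : ℕ) (hN : 2 ≤ N) (ℓ : ℝ) (hℓ : 0 < ℓ)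
    (V : ℝ → ℝ) (LV : NNReal) (hVlip : LipschitzWith LV V) (hVmono : Monotone V)
    (y : ℕ → ℝ → ℝ) (hy : IsFtLSolution N ℓ V y) (k : ℝ) :
    AntitoneOn (fun t => ∑ j ∈ Finset.Icc 1 (N - 1), max (y j t - k) 0)
      (Set.Ici (0 : ℝ)) ∧
    AntitoneOn (fun t => ∑ j ∈ Finset.Icc 1 (N - 1), -min (y j t - k) 0)
      (Set.Ici (0 : ℝ)) := by
  obtain ⟨hper, hode⟩ := hy
  constructor
  · exact ftl_aux N hN ℓ hℓ V hVmono y hper hode k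
  · have hW : Monotone (fun u : ℝ => -V (-u)) := fun u v huv => by
      simp only [neg_le_neg_iff]
      exact hVmono (neg_le_neg huv)
    have hode' : ∀ j ∈ Finset.Icc 1 (N - 1), ∀ t ∈ Set.Ici (0 : ℝ),
        HasDerivWithinAt (fun s => -(y j s))
          (1 / ℓ * ((fun u : ℝ => -V (-u)) (-(y (j + 1) t)) - (fun u : ℝ => -V (-u)) (-(y j t))))
          (Set.Ici (0 : ℝ)) t := by
      intro j hj t ht
      have h := (hode j hj t ht).neg
      convert h using 1
      · rfl
      · rfl
      · rfl
      simp only [neg_neg]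
      ring
    have h2 := ftl_aux N hN ℓ hℓ (fun u => -V (-u)) hW (fun j s => -(y j s))
      (fun t => by simp [hper t]) hode' (-k)
    have heq : (fun t => ∑ j ∈ Finset.Icc 1 (N - 1), max (-(y j t) - -k) 0)
        = fun t => ∑ j ∈ Finset.Icc 1 (N - 1), -min (y j t - k) 0 := by
      funext t
      apply Finset.sum_congr rfl
      intro j _
      rw [show -(y j t) - -k = -(y j t - k) from by ring]
      rcases le_total (y j t - k) 0 with h | h
      · rw [min_eq_left h, max_eq_left (neg_nonneg.2 h)]
      · rw [min_eq_right h, neg_zero, max_eq_right (neg_nonpos.2 h)]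
    rwa [heq] at h2
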